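/- Under the vertex-colouring model, for all 1 ≤ i ≤ d and all i' ≠ i: (a) E[W_i] = n π_i²; (b) Var(W_i) = n( π_i²(1 − π_i²) + D̃ π_i³(1 − π_i) ); (c) Cov(W_i, W_{i'}) = − n π_i² π_{i'}² (1 + D̃). -/

import Mathlib

open MeasureTheory ProbabilityTheory Finset
open scoped Classical

section Aux

variable {V : Type*} [Fintype V] [DecidableEq V] {d : ℕ}
  {Ω : Type*} [MeasurableSpace Ω]

lemma aux_meas_forall (P : Measure Ω) [IsProbabilityMeasure P] (π : Fin d → ℝ)
    (Y : V → Ω → Fin d)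
    (hYindep : iIndepFun Y P)
    (hYdist : ∀ v i, (P {ω | Y v ω = i}).toReal = π i)
    (S : Finset V) (g : V → Fin d) :
    (P {ω | ∀ v ∈ S, Y v ω = g v}).toReal = ∏ v ∈ S, π (g v) := by
  have h := (iIndepFun_iff_measure_inter_preimage_eq_mul.mp hYindep) S
    (sets := fun v => {g v}) (fun v _ => measurableSet_singleton _)
  have hset : {ω | ∀ v ∈ S, Y v ω = g v} = ⋂ v ∈ S, Y v ⁻¹' {g v} := by
    ext ω; simp
  rw [hset, h, ENNReal.toReal_prod]
  refine Finset.prod_congr rfl fun v _ => ?_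
  have : Y v ⁻¹' {g v} = {ω | Y v ω = g v} := by ext ω; simp
  rw [this, hYdist]

end Aux

/-- mean, variance and covariance of the numbers of monochrome edges in a
randomly vertex-coloured graph. -/
theorem monochrome_edge_moments {V : Type*} [Fintype V] [DecidableEq V]
    (G : SimpleGraph V) [DecidableRel G.Adj]
    (n : ℕ) (hn : n = G.edgeFinset.card) (hn1 : 1 ≤ n)
    (d : ℕ) (π : Fin d → ℝ) (hπ0 : ∀ i, 0 ≤ π i) (hπ1 : ∑ i, π i = 1)
    {Ω : Type*} [MeasurableSpace Ω] (P : Measure Ω) [IsProbabilityMeasure P]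
    (Y : V → Ω → Fin d) (hYmeas : ∀ v, Measurable (Y v))
    (hYindep : iIndepFun Y P)
    (hYdist : ∀ v i, (P {ω | Y v ω = i}).toReal = π i)
    (W : Fin d → Ω → ℝ)
    (hW : ∀ i ω, W i ω
      = ∑ e ∈ G.edgeFinset, (if ∀ v ∈ e, Y v ω = i then (1:ℝ) else 0))
    (De : Sym2 V → ℕ)
    (hDe : ∀ e, De e
      = (G.edgeFinset.filter (fun f => f ≠ e ∧ ∃ v, v ∈ f ∧ v ∈ e)).card)
    (Dt : ℝ) (hDt : Dt = (n : ℝ)⁻¹ * ∑ e ∈ G.edgeFinset, (De e : ℝ))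
    (i i' : Fin d) (hii' : i' ≠ i) :
    (∫ ω, W i ω ∂P) = n * (π i) ^ 2 ∧
    (∫ ω, (W i ω - n * (π i) ^ 2) ^ 2 ∂P)
      = n * ((π i) ^ 2 * (1 - (π i) ^ 2) + Dt * (π i) ^ 3 * (1 - π i)) ∧
    (∫ ω, (W i ω - n * (π i) ^ 2) * (W i' ω - n * (π i') ^ 2) ∂P)
      = -(n : ℝ) * (π i) ^ 2 * (π i') ^ 2 * (1 + Dt) := by
  classical
  have hn0 : (n : ℝ) ≠ 0 := by
    have : 0 < n := hn1
    positivity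
  -- measurability of the basic events
  have hmeasE : ∀ (e : Sym2 V) (c : Fin d), MeasurableSet {ω | ∀ v ∈ e, Y v ω = c} := by
    intro e c
    have hset : {ω | ∀ v ∈ e, Y v ω = c} = ⋂ v ∈ {v : V | v ∈ e}, Y v ⁻¹' {c} := by
      ext ω; simp
    rw [hset]
    exact MeasurableSet.biInter (Set.to_countable _)
      fun v _ => (hYmeas v) (measurableSet_singleton c)
  have hmeasP := aux_meas_forall P π Y hYindep hYdist
  -- edge decomposition
  have hedge : ∀ e ∈ G.edgeFinset, ∃ u v : V, u ≠ v ∧ e = s(u, v) := by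
    intro e
    induction e using Sym2.ind with
    | _ u v =>
      intro he
      have hadj : G.Adj u v := by simpa using he
      exact ⟨u, v, hadj.ne, rfl⟩
  -- probability of a single monochrome edge
  have hP1 : ∀ e ∈ G.edgeFinset, ∀ c : Fin d,
      (P {ω | ∀ v ∈ e, Y v ω = c}).toReal = π c ^ 2 := by
    intro e he c
    obtain ⟨u, v, huv, rfl⟩ := hedge e he
    have hset : {ω | ∀ w ∈ s(u, v), Y w ω = c}
        = {ω | ∀ w ∈ ({u, v} : Finset V), Y w ω = (fun _ => c) w} := by
      ext ω; simp [Sym2.mem_iff]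
    rw [hset, hmeasP, Finset.prod_pair huv]; ring
  -- joint probability for two edges
  have hP2 : ∀ e ∈ G.edgeFinset, ∀ f ∈ G.edgeFinset, ∀ c c' : Fin d,
      (P ({ω | ∀ v ∈ e, Y v ω = c} ∩ {ω | ∀ v ∈ f, Y v ω = c'})).toReal =
        if e = f then (if c = c' then π c ^ 2 else 0)
        else if ∃ w, w ∈ e ∧ w ∈ f then (if c = c' then π c ^ 3 else 0)
        else π c ^ 2 * π c' ^ 2 := by
    intro e he f hf c c'
    by_cases hef : e = f
    · subst hef
      rw [if_pos rfl]
      by_cases hcc : c = c'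
      · subst hcc; rw [Set.inter_self, hP1 e he c, if_pos rfl]
      · rw [if_neg hcc]
        obtain ⟨u, v, huv, rfl⟩ := hedge e he
        have hempty : {ω | ∀ w ∈ s(u, v), Y w ω = c} ∩ {ω | ∀ w ∈ s(u, v), Y w ω = c'} = ∅ := by
          ext ω
          simp only [Set.mem_inter_iff, Set.mem_setOf_eq, Set.mem_empty_iff_false, iff_false,
            not_and]
          intro h1 h2
          exact hcc (((h1 u (by simp)).symm.trans (h2 u (by simp))))
        rw [hempty]; simp
    · rw [if_neg hef]
      by_cases hshare : ∃ w, w ∈ e ∧ w ∈ f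
      · rw [if_pos hshare]
        obtain ⟨w, hwe, hwf⟩ := hshare
        by_cases hcc : c = c'
        · subst hcc
          rw [if_pos rfl]
          have hex : s(w, Sym2.Mem.other hwe) = e := Sym2.other_spec hwe
          have hfy : s(w, Sym2.Mem.other hwf) = f := Sym2.other_spec hwf
          set x := Sym2.Mem.other hwe
          set y := Sym2.Mem.other hwf
          have hed : ¬ e.IsDiag := by
            have := SimpleGraph.mem_edgeFinset.mp he
            exact (SimpleGraph.not_isDiag_of_mem_edgeSet G this)
          have hfd : ¬ f.IsDiag := by
            have := SimpleGraph.mem_edgeFinset.mp hf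
            exact (SimpleGraph.not_isDiag_of_mem_edgeSet G this)
          have hwx : w ≠ x := by
            intro h; apply hed; rw [← hex, ← h]; exact Sym2.mk_isDiag_iff.mpr rfl
          have hwy : w ≠ y := by
            intro h; apply hfd; rw [← hfy, ← h]; exact Sym2.mk_isDiag_iff.mpr rfl
          have hxy : x ≠ y := by
            intro h; apply hef; rw [← hex, ← hfy, h]
          have hset : {ω | ∀ v ∈ e, Y v ω = c} ∩ {ω | ∀ v ∈ f, Y v ω = c}
              = {ω | ∀ v ∈ ({w, x, y} : Finset V), Y v ω = (fun _ => c) v} := by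
            ext ω
            simp only [Set.mem_inter_iff, Set.mem_setOf_eq, ← hex, ← hfy, Sym2.mem_iff,
              Finset.mem_insert, Finset.mem_singleton]
            constructor
            · rintro ⟨h1, h2⟩ v hv
              rcases hv with rfl | rfl | rfl
              · exact h1 _ (Or.inl rfl)
              · exact h1 _ (Or.inr rfl)
              · exact h2 _ (Or.inr rfl)
            · intro h
              refine ⟨fun v hv => ?_, fun v hv => ?_⟩
              · rcases hv with rfl | rfl
                · exact h _ (Or.inl rfl)
                · exact h _ (Or.inr (Or.inl rfl))
              · rcases hv with rfl | rfl
                · exact h _ (Or.inl rfl)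
                · exact h _ (Or.inr (Or.inr rfl))
          rw [hset, hmeasP, Finset.prod_const]
          have hcard : ({w, x, y} : Finset V).card = 3 := by
            rw [Finset.card_insert_of_notMem (by simp [hwx, hwy]),
              Finset.card_insert_of_notMem (by simp [hxy]), Finset.card_singleton]
          rw [hcard]
        · rw [if_neg hcc]
          have hempty : {ω | ∀ v ∈ e, Y v ω = c} ∩ {ω | ∀ v ∈ f, Y v ω = c'} = ∅ := by
            ext ω
            simp only [Set.mem_inter_iff, Set.mem_setOf_eq, Set.mem_empty_iff_false, iff_false,
              not_and]
            intro h1 h2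
            exact hcc ((h1 w hwe).symm.trans (h2 w hwf))
          rw [hempty]; simp
      · rw [if_neg hshare]
        have hne : ∀ w, w ∈ e → w ∉ f := fun w hw hw' => hshare ⟨w, hw, hw'⟩
        obtain ⟨u, v, huv, rfl⟩ := hedge e he
        obtain ⟨a, b, hab, rfl⟩ := hedge f hf
        have hua : u ≠ a := by intro h; exact hne u (by simp) (by simp [h])
        have hub : u ≠ b := by intro h; exact hne u (by simp) (by simp [h])
        have hva : v ≠ a := by intro h; exact hne v (by simp) (by simp [h])
        have hvb : v ≠ b := by intro h; exact hne v (by simp) (by simp [h])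
        set g : V → Fin d := fun z => if z = a ∨ z = b then c' else c with hg
        have hgu : g u = c := by rw [hg]; simp [hua, hub]
        have hgv : g v = c := by rw [hg]; simp [hva, hvb]
        have hga : g a = c' := by rw [hg]; simp
        have hgb : g b = c' := by rw [hg]; simp
        have hset : {ω | ∀ z ∈ s(u, v), Y z ω = c} ∩ {ω | ∀ z ∈ s(a, b), Y z ω = c'}
            = {ω | ∀ z ∈ ({u, v, a, b} : Finset V), Y z ω = g z} := by
          ext ω
          simp only [Set.mem_inter_iff, Set.mem_setOf_eq, Sym2.mem_iff, Finset.mem_insert,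
            Finset.mem_singleton]
          constructor
          · rintro ⟨h1, h2⟩ z hz
            rcases hz with rfl | rfl | rfl | rfl
            · rw [hgu]; exact h1 _ (Or.inl rfl)
            · rw [hgv]; exact h1 _ (Or.inr rfl)
            · rw [hga]; exact h2 _ (Or.inl rfl)
            · rw [hgb]; exact h2 _ (Or.inr rfl)
          · intro h
            refine ⟨fun z hz => ?_, fun z hz => ?_⟩
            · rcases hz with rfl | rfl
              · rw [← hgu]; exact h _ (Or.inl rfl)
              · rw [← hgv]; exact h _ (Or.inr (Or.inl rfl))
            · rcases hz with rfl | rfl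
              · rw [← hga]; exact h _ (Or.inr (Or.inr (Or.inl rfl)))
              · rw [← hgb]; exact h _ (Or.inr (Or.inr (Or.inr rfl)))
        rw [hset, hmeasP]
        rw [Finset.prod_insert (by simp [huv, hua, hub]),
          Finset.prod_insert (by simp [hva, hvb]), Finset.prod_pair hab, hgu, hgv, hga, hgb]
        ring
  -- the indicator functions
  set X : Sym2 V → Fin d → Ω → ℝ := fun e c ω => if ∀ v ∈ e, Y v ω = c then 1 else 0 with hXdef
  have hXind : ∀ e c, X e c
      = Set.indicator {ω | ∀ v ∈ e, Y v ω = c} (fun _ => (1 : ℝ)) := by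
    intro e c; funext ω
    simp [hXdef, Set.indicator_apply, Set.mem_setOf_eq]
  have hXint : ∀ e c, Integrable (X e c) P := by
    intro e c; rw [hXind]; exact (integrable_const 1).indicator (hmeasE e c)
  have hXprod : ∀ e f c c', (fun ω => X e c ω * X f c' ω)
      = Set.indicator ({ω | ∀ v ∈ e, Y v ω = c} ∩ {ω | ∀ v ∈ f, Y v ω = c'})
          (fun _ => (1 : ℝ)) := by
    intro e f c c'; funext ω
    simp only [hXdef, Set.indicator_apply, Set.mem_inter_iff, Set.mem_setOf_eq]
    by_cases h1 : ∀ v ∈ e, Y v ω = c <;> by_cases h2 : ∀ v ∈ f, Y v ω = c'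
    · simp only [if_pos h1, if_pos h2, mul_one]
      rw [if_pos (⟨h1, h2⟩ : (∀ v ∈ e, Y v ω = c) ∧ ∀ v ∈ f, Y v ω = c')]
    · simp only [if_neg h2, mul_zero]
      rw [if_neg (show ¬((∀ v ∈ e, Y v ω = c) ∧ ∀ v ∈ f, Y v ω = c') from fun h => h2 h.2)]
    · simp only [if_neg h1, zero_mul]
      rw [if_neg (show ¬((∀ v ∈ e, Y v ω = c) ∧ ∀ v ∈ f, Y v ω = c') from fun h => h1 h.1)]
    · simp only [if_neg h1, zero_mul]
      rw [if_neg (show ¬((∀ v ∈ e, Y v ω = c) ∧ ∀ v ∈ f, Y v ω = c') from fun h => h1 h.1)]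
  have hXprodint : ∀ e f c c', Integrable (fun ω => X e c ω * X f c' ω) P := by
    intro e f c c'; rw [hXprod]
    exact (integrable_const 1).indicator ((hmeasE e c).inter (hmeasE f c'))
  have hintX : ∀ e c, ∫ ω, X e c ω ∂P = (P {ω | ∀ v ∈ e, Y v ω = c}).toReal := by
    intro e c; rw [hXind]
    exact integral_indicator_one (hmeasE e c)
  have hintXprod : ∀ e f c c', ∫ ω, X e c ω * X f c' ω ∂P
      = (P ({ω | ∀ v ∈ e, Y v ω = c} ∩ {ω | ∀ v ∈ f, Y v ω = c'})).toReal := by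
    intro e f c c'; rw [hXprod]
    exact integral_indicator_one ((hmeasE e c).inter (hmeasE f c'))
  have hWeq : ∀ c, W c = fun ω => ∑ e ∈ G.edgeFinset, X e c ω := by
    intro c; funext ω; rw [hW c ω]
  have hWint : ∀ c, Integrable (W c) P := by
    intro c; rw [hWeq]; exact integrable_finset_sum _ fun e _ => hXint e c
  have hWprodeq : ∀ c c', (fun ω => W c ω * W c' ω)
      = fun ω => ∑ e ∈ G.edgeFinset, ∑ f ∈ G.edgeFinset, X e c ω * X f c' ω := by
    intro c c'; funext ω
    rw [hWeq, hWeq, Finset.sum_mul_sum]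
  have hWWint : ∀ c c', Integrable (fun ω => W c ω * W c' ω) P := by
    intro c c'; rw [hWprodeq]
    exact integrable_finset_sum _ fun e _ => integrable_finset_sum _ fun f _ => hXprodint e f c c'
  -- mean
  have hmean : ∀ c, ∫ ω, W c ω ∂P = n * π c ^ 2 := by
    intro c
    rw [hWeq, integral_finset_sum _ fun e _ => hXint e c]
    rw [Finset.sum_congr rfl fun e he => (hintX e c).trans (hP1 e he c),
      Finset.sum_const, nsmul_eq_mul, ← hn]
  -- second moment
  have hsecond : ∀ c c', ∫ ω, W c ω * W c' ω ∂P
      = ∑ e ∈ G.edgeFinset, ∑ f ∈ G.edgeFinset,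
          (P ({ω | ∀ v ∈ e, Y v ω = c} ∩ {ω | ∀ v ∈ f, Y v ω = c'})).toReal := by
    intro c c'
    rw [hWprodeq,
      integral_finset_sum _ fun e _ => integrable_finset_sum _ fun f _ => hXprodint e f c c']
    refine Finset.sum_congr rfl fun e _ => ?_
    rw [integral_finset_sum _ fun f _ => hXprodint e f c c']
    exact Finset.sum_congr rfl fun f _ => hintXprod e f c c'
  -- counting lemma
  have hcount : ∀ (q1 q2 q3 : ℝ) (e : Sym2 V), e ∈ G.edgeFinset → ∀ (v : Sym2 V → ℝ),
      (∀ f ∈ G.edgeFinset, v f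
        = if e = f then q1 else if ∃ w, w ∈ e ∧ w ∈ f then q2 else q3) →
      ∑ f ∈ G.edgeFinset, v f = q1 + (De e : ℝ) * q2 + ((n : ℝ) - 1 - De e) * q3 := by
    intro q1 q2 q3 e he v hv
    have hcard1 : ((G.edgeFinset.erase e).filter (fun f => ∃ w, w ∈ e ∧ w ∈ f)).card = De e := by
      rw [hDe]; congr 1; ext f
      simp only [Finset.mem_filter, Finset.mem_erase]
      constructor
      · rintro ⟨⟨hfe, hf⟩, w, hw1, hw2⟩
        exact ⟨hf, hfe, w, hw2, hw1⟩
      · rintro ⟨hf, hfe, w, hw1, hw2⟩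
        exact ⟨⟨hfe, hf⟩, w, hw2, hw1⟩
    have hcard2 : (((G.edgeFinset.erase e).filter (fun f => ¬ ∃ w, w ∈ e ∧ w ∈ f)).card : ℝ)
        = (n : ℝ) - 1 - De e := by
      have h := Finset.card_filter_add_card_filter_not
        (s := G.edgeFinset.erase e) (p := fun f => ∃ w, w ∈ e ∧ w ∈ f)
      rw [Finset.card_erase_of_mem he, ← hn, hcard1] at h
      have hcast : (De e : ℝ) + ((G.edgeFinset.erase e).filter
          (fun f => ¬ ∃ w, w ∈ e ∧ w ∈ f)).card = (n : ℝ) - 1 := by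
        have := congrArg (fun k : ℕ => (k : ℝ)) h
        push_cast [Nat.cast_sub hn1] at this
        push_cast
        linarith
      linarith
    rw [← Finset.add_sum_erase _ v he, hv e he, if_pos rfl]
    rw [← Finset.sum_filter_add_sum_filter_not (G.edgeFinset.erase e)
      (fun f => ∃ w, w ∈ e ∧ w ∈ f) v]
    have h2 : ∑ f ∈ (G.edgeFinset.erase e).filter (fun f => ∃ w, w ∈ e ∧ w ∈ f), v f
        = (De e : ℝ) * q2 := by
      rw [Finset.sum_congr rfl (fun f hf => ?_), Finset.sum_const, nsmul_eq_mul, hcard1]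
      obtain ⟨hf1, hf2⟩ := Finset.mem_filter.mp hf
      rw [hv f (Finset.mem_of_mem_erase hf1),
        if_neg (fun h => (Finset.mem_erase.mp hf1).1 h.symm), if_pos hf2]
    have h3 : ∑ f ∈ (G.edgeFinset.erase e).filter (fun f => ¬ ∃ w, w ∈ e ∧ w ∈ f), v f
        = ((n : ℝ) - 1 - De e) * q3 := by
      rw [Finset.sum_congr rfl (fun f hf => ?_), Finset.sum_const, nsmul_eq_mul, hcard2]
      obtain ⟨hf1, hf2⟩ := Finset.mem_filter.mp hf
      rw [hv f (Finset.mem_of_mem_erase hf1),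
        if_neg (fun h => (Finset.mem_erase.mp hf1).1 h.symm), if_neg hf2]
    rw [h2, h3]; ring
  have hSDe : ∑ e ∈ G.edgeFinset, (De e : ℝ) = n * Dt := by
    rw [hDt, ← mul_assoc, mul_inv_cancel₀ hn0, one_mul]
  -- second moment, same colour
  have hvar2 : ∫ ω, W i ω * W i ω ∂P
      = (n : ℝ) * π i ^ 2 + ((n : ℝ) * Dt) * π i ^ 3
        + ((n : ℝ) * ((n : ℝ) - 1) - (n : ℝ) * Dt) * (π i ^ 2 * π i ^ 2) := by
    rw [hsecond i i]
    have hin : ∀ e ∈ G.edgeFinset,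
        (∑ f ∈ G.edgeFinset,
          (P ({ω | ∀ v ∈ e, Y v ω = i} ∩ {ω | ∀ v ∈ f, Y v ω = i})).toReal)
        = π i ^ 2 + (De e : ℝ) * π i ^ 3 + ((n : ℝ) - 1 - De e) * (π i ^ 2 * π i ^ 2) := by
      intro e he
      refine hcount _ _ _ e he _ fun f hf => ?_
      rw [hP2 e he f hf i i]; simp
    rw [Finset.sum_congr rfl hin, Finset.sum_add_distrib, Finset.sum_add_distrib,
      Finset.sum_const, nsmul_eq_mul, ← hn, ← Finset.sum_mul, hSDe, ← Finset.sum_mul]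
    have : ∑ e ∈ G.edgeFinset, ((n : ℝ) - 1 - De e)
        = (n : ℝ) * ((n : ℝ) - 1) - (n : ℝ) * Dt := by
      rw [Finset.sum_sub_distrib, Finset.sum_const, nsmul_eq_mul, ← hn, hSDe]
    rw [this]
  -- second moment, different colours
  have hcov2 : ∫ ω, W i ω * W i' ω ∂P
      = ((n : ℝ) * ((n : ℝ) - 1) - (n : ℝ) * Dt) * (π i ^ 2 * π i' ^ 2) := by
    rw [hsecond i i']
    have hin : ∀ e ∈ G.edgeFinset,
        (∑ f ∈ G.edgeFinset,
          (P ({ω | ∀ v ∈ e, Y v ω = i} ∩ {ω | ∀ v ∈ f, Y v ω = i'})).toReal)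
        = 0 + (De e : ℝ) * 0 + ((n : ℝ) - 1 - De e) * (π i ^ 2 * π i' ^ 2) := by
      intro e he
      refine hcount _ _ _ e he _ fun f hf => ?_
      rw [hP2 e he f hf i i']
      simp [Ne.symm hii']
    rw [Finset.sum_congr rfl hin]
    simp only [zero_add, mul_zero, add_zero]
    rw [← Finset.sum_mul]
    have : ∑ e ∈ G.edgeFinset, ((n : ℝ) - 1 - De e)
        = (n : ℝ) * ((n : ℝ) - 1) - (n : ℝ) * Dt := by
      rw [Finset.sum_sub_distrib, Finset.sum_const, nsmul_eq_mul, ← hn, hSDe]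
    rw [this]
  refine ⟨hmean i, ?_, ?_⟩
  · -- variance
    have hfun : (fun ω => (W i ω - (n : ℝ) * π i ^ 2) ^ 2)
        = fun ω => (W i ω * W i ω - (2 * ((n : ℝ) * π i ^ 2)) * W i ω)
            + ((n : ℝ) * π i ^ 2) ^ 2 := by
      funext ω; ring
    have hint1 : Integrable
        (fun ω => W i ω * W i ω - 2 * ((n : ℝ) * π i ^ 2) * W i ω) P :=
      (hWWint i i).sub ((hWint i).const_mul _)
    have hint2 : Integrable (fun ω => 2 * ((n : ℝ) * π i ^ 2) * W i ω) P :=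
      (hWint i).const_mul _
    rw [hfun, integral_add hint1 (integrable_const _),
      integral_sub (hWWint i i) hint2, integral_const_mul _ _, hmean i,
      integral_const, hvar2]
    simp only [measure_univ, probReal_univ, ENNReal.toReal_one, smul_eq_mul, one_mul]
    ring
  · -- covariance
    have hfun : (fun ω => (W i ω - (n : ℝ) * π i ^ 2) * (W i' ω - (n : ℝ) * π i' ^ 2))
        = fun ω => ((W i ω * W i' ω - ((n : ℝ) * π i' ^ 2) * W i ω)
            - ((n : ℝ) * π i ^ 2) * W i' ω) + ((n : ℝ) * π i ^ 2) * ((n : ℝ) * π i' ^ 2) := by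
      funext ω; ring
    have hint1 : Integrable (fun ω => (n : ℝ) * π i' ^ 2 * W i ω) P :=
      (hWint i).const_mul _
    have hint2 : Integrable (fun ω => (n : ℝ) * π i ^ 2 * W i' ω) P :=
      (hWint i').const_mul _
    have hint3 : Integrable (fun ω => W i ω * W i' ω - (n : ℝ) * π i' ^ 2 * W i ω) P :=
      (hWWint i i').sub hint1
    have hint4 : Integrable
        (fun ω => W i ω * W i' ω - (n : ℝ) * π i' ^ 2 * W i ω
          - (n : ℝ) * π i ^ 2 * W i' ω) P := hint3.sub hint2
    rw [hfun, integral_add hint4 (integrable_const _),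
      integral_sub hint3 hint2, integral_sub (hWWint i i') hint1, integral_const_mul _ _,
      integral_const_mul _ _, hmean i, hmean i', integral_const, hcov2]
    simp only [measure_univ, probReal_univ, ENNReal.toReal_one, smul_eq_mul, one_mul]
    ring
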